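/- arXiv:2310.05839 — 2 statements merged into one kernel-verified Lean document; each statement's English description precedes it below -/
import Mathlib

section
/- In a finite set of Point Algebra constraints, every constraint of the form x ≠ y with x and y distinct variables can be disregarded when all other constraints are of the form u < v: the set of <-constraints together with ≠-constraints between distinct variables is satisfiable over ℚ if and only if the set of <-constraints alone is satisfiable. -/
/-- In an instance consisting of `<`-constraints and `≠`-constraints between distinct
variables, the `≠`-constraints can be disregarded: the whole instance is satisfiable
over ℚ iff the `<`-constraints alone are satisfiable. -/
theorem neq_constraints_disregarded {V : Type} [Fintype V]
    (lts neqs : Finset (V × V)) (h : ∀ p ∈ neqs, p.1 ≠ p.2) :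
    (∃ α : V → ℚ, (∀ p ∈ lts, α p.1 < α p.2) ∧ ∀ p ∈ neqs, α p.1 ≠ α p.2) ↔
      (∃ α : V → ℚ, ∀ p ∈ lts, α p.1 < α p.2) := by
  constructor
  · rintro ⟨α, h1, _⟩; exact ⟨α, h1⟩
  rintro ⟨α, hα⟩
  classical
  set n := Fintype.card V with hn
  let e := Fintype.equivFin V
  let g : V → ℚ := fun v => ((e v : ℕ) : ℚ)
  have hg : Function.Injective g := by
    intro u v huv
    have : ((e u : ℕ) : ℚ) = ((e v : ℕ) : ℚ) := huv
    have : (e u : ℕ) = (e v : ℕ) := by exact_mod_cast this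
    exact e.injective (Fin.ext this)
  have hgb : ∀ v, g v ≤ (n : ℚ) - 1 := by
    intro v
    have h1 : (e v : ℕ) + 1 ≤ n := (e v).isLt
    have h2 : ((e v : ℕ) : ℚ) + 1 ≤ (n : ℚ) := by exact_mod_cast h1
    simp only [g]
    linarith
  have hg0 : ∀ v, 0 ≤ g v := fun v => Nat.cast_nonneg _
  set S : Finset ℚ := insert 1 (((Finset.univ ×ˢ Finset.univ : Finset (V × V)).filter
      (fun p => α p.1 < α p.2)).image (fun p => α p.2 - α p.1)) with hS
  have hSne : S.Nonempty := ⟨1, Finset.mem_insert_self _ _⟩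
  have hSpos : ∀ x ∈ S, 0 < x := by
    intro x hx
    rcases Finset.mem_insert.mp hx with rfl | hx
    · norm_num
    · obtain ⟨p, hp, rfl⟩ := Finset.mem_image.mp hx
      have := (Finset.mem_filter.mp hp).2
      linarith
  set m := S.min' hSne with hm
  have hmpos : 0 < m := hSpos _ (S.min'_mem hSne)
  set δ := m / ((n : ℚ) + 1) with hδ
  have hnn : (0:ℚ) ≤ (n:ℚ) := Nat.cast_nonneg _
  have hδpos : 0 < δ := by positivity
  have hδle : δ * ((n : ℚ) + 1) = m := by
    rw [hδ]; field_simp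
  have key : ∀ u v : V, α u < α v → α u + δ * g u < α v + δ * g v := by
    intro u v huv
    have hmle : m ≤ α v - α u := by
      apply S.min'_le
      apply Finset.mem_insert_of_mem
      exact Finset.mem_image.mpr ⟨(u, v), Finset.mem_filter.mpr
        ⟨Finset.mem_product.mpr ⟨Finset.mem_univ _, Finset.mem_univ _⟩, huv⟩, rfl⟩
    have hgu : g u ≤ (n : ℚ) - 1 := hgb u
    have hgv : 0 ≤ g v := hg0 v
    nlinarith [hg0 u, hδpos]
  refine ⟨fun v => α v + δ * g v, fun p hp => key _ _ (hα p hp), ?_⟩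
  intro p hp hne
  have hpne := h p hp
  rcases lt_trichotomy (α p.1) (α p.2) with h1 | h1 | h1
  · exact absurd hne (ne_of_lt (key _ _ h1))
  · have hgeq : g p.1 = g p.2 := by
      have hne' : α p.1 + δ * g p.1 = α p.2 + δ * g p.2 := hne
      have h2 : δ * g p.1 = δ * g p.2 := by rw [h1] at hne'; linarith
      exact mul_left_cancel₀ (ne_of_gt hδpos) h2
    exact hpne (hg hgeq)
  · exact absurd hne.symm (ne_of_lt (key _ _ h1))
end

section
/- Let D be the digraph obtained by sequentially joining m ≥ 1 diamonds (identifying the east vertex of each diamond with the west vertex of the next). Then D is strongly connected, but for any diamond, deleting its n→s arc results in a digraph that is not strongly connected; specifically, the junction vertices on opposite sides of the picked diamond are no longer strongly connected. -/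
/-- Vertices of a sequence of `m` joined diamonds: `m+1` junction vertices
(`junction i` being the west vertex of diamond `i` and the east vertex of
diamond `i-1`), plus a north and a south vertex for each diamond. -/
inductive CV (m : ℕ)
  | junction : Fin (m + 1) → CV m
  | north : Fin m → CV m
  | south : Fin m → CV m

/-- Arcs of the joined diamonds: for each diamond `i`, arcs
`south i → junction i` (west), `junction i → north i`,
`south i → junction (i+1)` (east), `junction (i+1) → north i`, and
`north i → south i`. -/
def carc {m : ℕ} : CV m → CV m → Prop
  | .south i, .junction j => j = i.castSucc ∨ j = i.succ
  | .junction j, .north i => j = i.castSucc ∨ j = i.succ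
  | .north i, .south i' => i = i'
  | _, _ => False

/-- Arcs after picking diamond `d`, i.e. deleting its `north d → south d` arc. -/
def carcDel {m : ℕ} (d : Fin m) (a b : CV m) : Prop :=
  carc a b ∧ ¬(a = CV.north d ∧ b = CV.south d)

def inLeft {m : ℕ} (d : Fin m) : CV m → Prop
  | .junction j => j.val ≤ d.val
  | .north i => i.val ≤ d.val
  | .south i => i.val < d.val

lemma inLeft_step {m : ℕ} (d : Fin m) {a b : CV m} (h : carcDel d a b)
    (ha : inLeft d a) : inLeft d b := by
  obtain ⟨hc, hn⟩ := h
  cases a with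
  | junction j =>
    cases b with
    | north i =>
      rcases hc with h | h <;> subst h <;>
        simp only [inLeft, Fin.coe_castSucc, Fin.val_succ] at ha ⊢ <;> omega
    | junction j' => exact absurd hc id
    | south i' => exact absurd hc id
  | north i =>
    cases b with
    | south i' =>
      have : i = i' := hc
      subst this
      have : i ≠ d := by rintro rfl; exact hn ⟨rfl, rfl⟩
      simp only [inLeft] at ha ⊢
      have := Fin.val_ne_of_ne this
      omega
    | junction j => exact absurd hc id
    | north i' => exact absurd hc id
  | south i =>
    cases b with
    | junction j =>
      rcases hc with h | h <;> subst h <;>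
        simp only [inLeft, Fin.coe_castSucc, Fin.val_succ] at ha ⊢ <;> omega
    | north i' => exact absurd hc id
    | south i' => exact absurd hc id

lemma inLeft_reach {m : ℕ} (d : Fin m) {a b : CV m}
    (h : Relation.ReflTransGen (carcDel d) a b) (ha : inLeft d a) : inLeft d b := by
  induction h with
  | refl => exact ha
  | tail _ hstep ih => exact inLeft_step d hstep ih

lemma junc_forward {m : ℕ} (i : Fin m) :
    Relation.ReflTransGen carc (CV.junction i.castSucc) (CV.junction i.succ) := by
  have h1 : carc (CV.junction i.castSucc) (CV.north i) := Or.inl rfl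
  have h2 : carc (CV.north i) (CV.south i) := rfl
  have h3 : carc (CV.south i) (CV.junction i.succ) := Or.inr rfl
  exact Relation.ReflTransGen.head h1 (Relation.ReflTransGen.head h2
    (Relation.ReflTransGen.single h3))

lemma junc_back {m : ℕ} (i : Fin m) :
    Relation.ReflTransGen carc (CV.junction i.succ) (CV.junction i.castSucc) := by
  have h1 : carc (CV.junction i.succ) (CV.north i) := Or.inr rfl
  have h2 : carc (CV.north i) (CV.south i) := rfl
  have h3 : carc (CV.south i) (CV.junction i.castSucc) := Or.inl rfl
  exact Relation.ReflTransGen.head h1 (Relation.ReflTransGen.head h2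
    (Relation.ReflTransGen.single h3))

lemma junc_to_zero {m : ℕ} : ∀ (a : ℕ) (h : a ≤ m),
    Relation.ReflTransGen carc (CV.junction ⟨a, by omega⟩)
      (CV.junction (⟨0, by omega⟩ : Fin (m+1))) := by
  intro a
  induction a with
  | zero => intro h; exact Relation.ReflTransGen.refl
  | succ n ih =>
    intro h
    have h1 : n < m := by omega
    have hb := junc_back ⟨n, h1⟩
    have : (⟨n, h1⟩ : Fin m).succ = ⟨n+1, by omega⟩ := rfl
    rw [this] at hb
    have : (⟨n, h1⟩ : Fin m).castSucc = ⟨n, by omega⟩ := rfl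
    rw [this] at hb
    exact hb.trans (ih (by omega))

lemma zero_to_junc {m : ℕ} : ∀ (a : ℕ) (h : a ≤ m),
    Relation.ReflTransGen carc (CV.junction (⟨0, by omega⟩ : Fin (m+1)))
      (CV.junction ⟨a, by omega⟩) := by
  intro a
  induction a with
  | zero => intro h; exact Relation.ReflTransGen.refl
  | succ n ih =>
    intro h
    have h1 : n < m := by omega
    have hf := junc_forward ⟨n, h1⟩
    have e1 : (⟨n, h1⟩ : Fin m).succ = ⟨n+1, by omega⟩ := rfl
    have e2 : (⟨n, h1⟩ : Fin m).castSucc = ⟨n, by omega⟩ := rfl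
    rw [e1, e2] at hf
    exact (ih (by omega)).trans hf

lemma junc_junc {m : ℕ} (j k : Fin (m+1)) :
    Relation.ReflTransGen carc (CV.junction j) (CV.junction k) := by
  have hj : (⟨j.val, j.isLt⟩ : Fin (m+1)) = j := rfl
  have hk : (⟨k.val, k.isLt⟩ : Fin (m+1)) = k := rfl
  have h1 := junc_to_zero (m := m) j.val (by omega)
  have h2 := zero_to_junc (m := m) k.val (by omega)
  rw [hj] at h1; rw [hk] at h2
  exact h1.trans h2

lemma to_junc {m : ℕ} (x : CV m) : ∃ j, Relation.ReflTransGen carc x (CV.junction j) := by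
  cases x with
  | junction j => exact ⟨j, .refl⟩
  | north i =>
    refine ⟨i.castSucc, ?_⟩
    have h2 : carc (CV.north i) (CV.south i) := rfl
    have h3 : carc (CV.south i) (CV.junction i.castSucc) := Or.inl rfl
    exact Relation.ReflTransGen.head h2 (Relation.ReflTransGen.single h3)
  | south i => exact ⟨i.castSucc, Relation.ReflTransGen.single (Or.inl rfl)⟩

lemma from_junc {m : ℕ} (x : CV m) : ∃ j, Relation.ReflTransGen carc (CV.junction j) x := by
  cases x with
  | junction j => exact ⟨j, .refl⟩
  | north i => exact ⟨i.castSucc, Relation.ReflTransGen.single (Or.inl rfl)⟩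
  | south i =>
    refine ⟨i.castSucc, ?_⟩
    have h1 : carc (CV.junction i.castSucc) (CV.north i) := Or.inl rfl
    have h2 : carc (CV.north i) (CV.south i) := rfl
    exact Relation.ReflTransGen.head h1 (Relation.ReflTransGen.single h2)


/-- A sequence of `m ≥ 1` joined diamonds is strongly connected, but picking any
diamond destroys strong connectivity; in particular the junction vertices on the
two sides of the picked diamond are no longer strongly connected. -/
theorem joined_diamonds_strongly_connected {m : ℕ} (hm : 1 ≤ m) :
    (∀ x y : CV m, Relation.ReflTransGen carc x y) ∧
    ∀ d : Fin m,
      (¬ ∀ x y : CV m, Relation.ReflTransGen (carcDel d) x y) ∧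
      ¬ (Relation.ReflTransGen (carcDel d) (CV.junction d.castSucc) (CV.junction d.succ) ∧
         Relation.ReflTransGen (carcDel d) (CV.junction d.succ) (CV.junction d.castSucc)) := by
  have hpos : ∀ x y : CV m, Relation.ReflTransGen carc x y := by
    intro x y
    obtain ⟨jx, hx⟩ := to_junc x
    obtain ⟨jy, hy⟩ := from_junc y
    exact hx.trans ((junc_junc jx jy).trans hy)
  refine ⟨hpos, fun d => ?_⟩
  have hkey : ¬ Relation.ReflTransGen (carcDel d) (CV.junction d.castSucc)
      (CV.junction d.succ) := by
    intro h
    have ha : inLeft d (CV.junction d.castSucc) := by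
      simp [inLeft]
    have := inLeft_reach d h ha
    simp only [inLeft, Fin.val_succ] at this
    omega
  exact ⟨fun h => hkey (h _ _), fun h => hkey h.1⟩
end
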